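/- Fix a ∈ (0,1) and σ > 0, let S(ω) = σ²/(1 + a² − 2a cos ω) for ω ∈ [−π,π], θ_max = σ²/(1−a)², and define g(θ) = (1/2π) ∫_{−π}^{π} min(θ, S(ω)) dω. Then g is differentiable at every θ ∈ (0, θ_max) with g'(θ) = (1/2π) · Leb( { ω ∈ [−π, π] : S(ω) > θ } ), and g'(θ) > 0 for all θ ∈ (0, θ_max). (This is the differentiation step in the proof of the paper's Lemma 9, used to invert the limiting reverse water-filling equation.) -/

import Mathlib

open MeasureTheory

lemma wf_denom_pos {a : ℝ} (ha : 0 < a) (ha1 : a < 1) (ω : ℝ) :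
    0 < 1 + a ^ 2 - 2 * a * Real.cos ω := by
  nlinarith [Real.cos_le_one ω, mul_pos (sub_pos.mpr ha1) (sub_pos.mpr ha1)]


lemma min_sub_le_ite (t₁ t₂ x : ℝ) (h : t₁ ≤ t₂) :
    min t₂ x - min t₁ x ≤ (t₂ - t₁) * (if t₁ < x then 1 else 0) := by
  rcases min_cases t₂ x with ⟨e2, h2⟩ | ⟨e2, h2⟩ <;>
    rcases min_cases t₁ x with ⟨e1, h1⟩ | ⟨e1, h1⟩ <;>
    rw [e2, e1] <;> split_ifs with hx <;> simp <;> linarith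

lemma ite_le_min_sub (t₁ t₂ x : ℝ) (h : t₁ ≤ t₂) :
    (t₂ - t₁) * (if t₂ < x then 1 else 0) ≤ min t₂ x - min t₁ x := by
  rcases min_cases t₂ x with ⟨e2, h2⟩ | ⟨e2, h2⟩ <;>
    rcases min_cases t₁ x with ⟨e1, h1⟩ | ⟨e1, h1⟩ <;>
    rw [e2, e1] <;> split_ifs with hx <;> simp <;> linarith

lemma wf_level_null {a σ θ : ℝ} (ha : 0 < a) (ha1 : a < 1) (hσ : 0 < σ) (hθ : 0 < θ)
    (S : ℝ → ℝ) (hS : ∀ ω, S ω = σ ^ 2 / (1 + a ^ 2 - 2 * a * Real.cos ω)) :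
    volume {ω ∈ Set.Icc (-Real.pi) Real.pi | S ω = θ} = 0 := by
  set c : ℝ := (1 + a ^ 2 - σ ^ 2 / θ) / (2 * a) with hc
  have hsub : {ω ∈ Set.Icc (-Real.pi) Real.pi | S ω = θ} ⊆
      {Real.arccos c, -Real.arccos c} := by
    rintro ω ⟨⟨hlo, hhi⟩, heq⟩
    have hd := wf_denom_pos ha ha1 ω
    rw [hS ω] at heq
    have hcos : Real.cos ω = c := by
      have hdd : 1 + a ^ 2 - 2 * a * Real.cos ω = σ ^ 2 / θ := by
        rw [eq_div_iff hθ.ne']; rw [div_eq_iff hd.ne'] at heq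
        nlinarith [heq]
      rw [hc, eq_div_iff (by positivity : (2*a:ℝ) ≠ 0)]
      linarith
    rcases le_total 0 ω with h0 | h0
    · left
      rw [← hcos, Real.arccos_cos h0 hhi]
    · right
      have : Real.arccos c = -ω := by
        rw [← hcos, ← Real.cos_neg, Real.arccos_cos (by linarith) (by linarith)]
      simp [this]
  exact measure_mono_null hsub
    (((Set.finite_singleton _).insert _).measure_zero volume)

theorem water_filling_derivative
    (a σ : ℝ) (ha : 0 < a) (ha1 : a < 1) (hσ : 0 < σ)
    (θmax : ℝ) (hθmax : θmax = σ ^ 2 / (1 - a) ^ 2)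
    (S : ℝ → ℝ) (hS : ∀ ω, S ω = σ ^ 2 / (1 + a ^ 2 - 2 * a * Real.cos ω))
    (g : ℝ → ℝ)
    (hg : ∀ θ, g θ = (1 / (2 * Real.pi)) * ∫ ω in (-Real.pi)..Real.pi, min θ (S ω)) :
    ∀ θ ∈ Set.Ioo 0 θmax,
      HasDerivAt g
        ((1 / (2 * Real.pi)) *
          (volume {ω ∈ Set.Icc (-Real.pi) Real.pi | θ < S ω}).toReal) θ ∧
      0 < (1 / (2 * Real.pi)) *
          (volume {ω ∈ Set.Icc (-Real.pi) Real.pi | θ < S ω}).toReal := by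
  have hpi := Real.pi_pos
  -- continuity of S
  have hScont : Continuous S := by
    have : S = fun ω => σ ^ 2 / (1 + a ^ 2 - 2 * a * Real.cos ω) := funext hS
    rw [this]
    exact continuous_const.div (by continuity) fun ω => (wf_denom_pos ha ha1 ω).ne'
  -- the sets
  set A : ℝ → Set ℝ := fun t => {ω ∈ Set.Icc (-Real.pi) Real.pi | t < S ω} with hA
  have hAeq : ∀ t, A t = Set.Icc (-Real.pi) Real.pi ∩ S ⁻¹' Set.Ioi t := by
    intro t; ext ω; simp [hA, Set.mem_sep_iff, and_comm]
  have hUmeas : ∀ t, MeasurableSet (S ⁻¹' Set.Ioi t) :=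
    fun t => hScont.measurable measurableSet_Ioi
  have hAmeas : ∀ t, MeasurableSet (A t) := by
    intro t; rw [hAeq]; exact measurableSet_Icc.inter (hUmeas t)
  have hAfin : ∀ t, volume (A t) ≠ ⊤ := by
    intro t
    have hsub : A t ⊆ Set.Icc (-Real.pi) Real.pi := fun ω hω => hω.1
    exact ne_top_of_le_ne_top (by simp [Real.volume_Icc]) (measure_mono hsub)
  set m : ℝ → ℝ := fun t => (volume (A t)).toReal with hm
  have hAanti : ∀ {t t' : ℝ}, t ≤ t' → A t' ⊆ A t := by
    intro t t' htt ω hω; exact ⟨hω.1, lt_of_le_of_lt htt hω.2⟩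
  have hmanti : ∀ {t t' : ℝ}, t ≤ t' → m t' ≤ m t := by
    intro t t' htt
    exact ENNReal.toReal_mono (hAfin t) (measure_mono (hAanti htt))
  -- integrability
  have hint : ∀ t : ℝ, IntervalIntegrable (fun ω => min t (S ω)) volume (-Real.pi) Real.pi :=
    fun t => (continuous_const.min hScont).intervalIntegrable _ _
  set h : ℝ → ℝ := fun t => ∫ ω in (-Real.pi)..Real.pi, min t (S ω) with hh
  -- indicator integral equals m
  have hind : ∀ t : ℝ, (∫ ω in (-Real.pi)..Real.pi,
      Set.indicator (S ⁻¹' Set.Ioi t) (fun _ => (1:ℝ)) ω) = m t := by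
    intro t
    rw [intervalIntegral.integral_of_le (by linarith), setIntegral_indicator (hUmeas t),
      setIntegral_const]
    have hae : (Set.Ioc (-Real.pi) Real.pi ∩ S ⁻¹' Set.Ioi t : Set ℝ) =ᵐ[volume] A t := by
      rw [hAeq]
      exact Filter.EventuallyEq.inter Ioc_ae_eq_Icc (Filter.EventuallyEq.refl _ _)
    rw [measureReal_congr hae]
    simp [hm, measureReal_def]
  have hindii : ∀ t : ℝ, IntervalIntegrable
      (Set.indicator (S ⁻¹' Set.Ioi t) (fun _ => (1:ℝ))) volume (-Real.pi) Real.pi := by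
    intro t
    rw [intervalIntegrable_iff]
    exact (integrableOn_const measure_Ioc_lt_top.ne).indicator (hUmeas t)
  have hieq : ∀ (t ω : ℝ), (S ⁻¹' Set.Ioi t).indicator (fun _ => (1:ℝ)) ω
      = if t < S ω then 1 else 0 := by
    intro t ω
    by_cases hc : t < S ω
    · rw [Set.indicator_of_mem (show ω ∈ S ⁻¹' Set.Ioi t from hc), if_pos hc]
    · rw [Set.indicator_of_notMem (show ω ∉ S ⁻¹' Set.Ioi t from hc), if_neg hc]
  -- sandwich inequality
  have hkey : ∀ {t₁ t₂ : ℝ}, t₁ ≤ t₂ →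
      (t₂ - t₁) * m t₂ ≤ h t₂ - h t₁ ∧ h t₂ - h t₁ ≤ (t₂ - t₁) * m t₁ := by
    intro t₁ t₂ h12
    have hsubeq : h t₂ - h t₁ = ∫ ω in (-Real.pi)..Real.pi,
        (min t₂ (S ω) - min t₁ (S ω)) :=
      (intervalIntegral.integral_sub (hint t₂) (hint t₁)).symm
    constructor
    · rw [hsubeq, ← hind t₂, ← intervalIntegral.integral_const_mul]
      apply intervalIntegral.integral_mono_on (by linarith)
        ((hindii t₂).const_mul _) ((hint t₂).sub (hint t₁))
      intro ω hω
      rw [hieq]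
      exact ite_le_min_sub t₁ t₂ (S ω) h12
    · rw [hsubeq, ← hind t₁, ← intervalIntegral.integral_const_mul]
      apply intervalIntegral.integral_mono_on (by linarith)
        ((hint t₂).sub (hint t₁)) ((hindii t₁).const_mul _)
      intro ω hω
      rw [hieq]
      exact min_sub_le_ite t₁ t₂ (S ω) h12
  -- continuity of m
  have hmcont : ∀ θ : ℝ, 0 < θ → ContinuousAt m θ := by
    intro θ hθ
    have hu : Filter.Tendsto (fun n : ℕ => m (θ + 1/(n+1))) Filter.atTop (nhds (m θ)) := by
      have hmono : Monotone (fun n : ℕ => A (θ + 1/(n+1))) := by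
        intro n k hnk
        apply hAanti
        have h1 : (1:ℝ)/(k+1) ≤ 1/(n+1) := by
          apply one_div_le_one_div_of_le (by positivity)
          exact_mod_cast Nat.succ_le_succ hnk
        linarith
      have hun : (⋃ n : ℕ, A (θ + 1/(n+1))) = A θ := by
        ext ω
        simp only [Set.mem_iUnion]
        constructor
        · rintro ⟨n, hn1, hn2⟩
          refine ⟨hn1, lt_of_le_of_lt ?_ hn2⟩
          have : (0:ℝ) < 1/(n+1) := by positivity
          linarith
        · rintro ⟨hω, hlt⟩
          obtain ⟨n, hn⟩ := exists_nat_one_div_lt (sub_pos.mpr hlt)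
          exact ⟨n, hω, by push_cast at hn ⊢; linarith⟩
      have h1 := tendsto_measure_iUnion_atTop (μ := volume) hmono
      rw [hun] at h1
      exact (ENNReal.tendsto_toReal (hAfin θ)).comp h1
    have hv : Filter.Tendsto (fun n : ℕ => m (θ - 1/(n+1))) Filter.atTop (nhds (m θ)) := by
      have hanti : Antitone (fun n : ℕ => A (θ - 1/(n+1))) := by
        intro n k hnk
        apply hAanti
        have h1 : (1:ℝ)/(k+1) ≤ 1/(n+1) := by
          apply one_div_le_one_div_of_le (by positivity)
          exact_mod_cast Nat.succ_le_succ hnk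
        linarith
      have hin : (⋂ n : ℕ, A (θ - 1/(n+1)))
          = Set.Icc (-Real.pi) Real.pi ∩ {ω | θ ≤ S ω} := by
        ext ω
        simp only [Set.mem_iInter, Set.mem_inter_iff, Set.mem_setOf_eq]
        constructor
        · intro hall
          refine ⟨(hall 0).1, ?_⟩
          by_contra hcon
          push_neg at hcon
          obtain ⟨n, hn⟩ := exists_nat_one_div_lt (sub_pos.mpr hcon)
          have := (hall n).2
          push_cast at hn this
          linarith
        · rintro ⟨hω, hle⟩ n
          refine ⟨hω, ?_⟩
          have : (0:ℝ) < 1/(n+1) := by positivity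
          linarith
      have hBA : volume (Set.Icc (-Real.pi) Real.pi ∩ {ω | θ ≤ S ω}) = volume (A θ) := by
        apply le_antisymm
        · have hsub : Set.Icc (-Real.pi) Real.pi ∩ {ω | θ ≤ S ω} ⊆
              A θ ∪ {ω ∈ Set.Icc (-Real.pi) Real.pi | S ω = θ} := by
            rintro ω ⟨hω, hle⟩
            have hle' : θ ≤ S ω := hle
            rcases eq_or_lt_of_le hle' with heq | hlt
            · exact Or.inr ⟨hω, heq.symm⟩
            · exact Or.inl ⟨hω, hlt⟩
          calc volume (Set.Icc (-Real.pi) Real.pi ∩ {ω | θ ≤ S ω})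
              ≤ volume (A θ ∪ {ω ∈ Set.Icc (-Real.pi) Real.pi | S ω = θ}) :=
                measure_mono hsub
            _ ≤ volume (A θ) + volume {ω ∈ Set.Icc (-Real.pi) Real.pi | S ω = θ} :=
                measure_union_le _ _
            _ = volume (A θ) := by rw [wf_level_null ha ha1 hσ hθ S hS, add_zero]
        · apply measure_mono
          rintro ω ⟨hω, hlt⟩
          exact ⟨hω, le_of_lt hlt⟩
      have h1 := tendsto_measure_iInter_atTop (μ := volume)
        (fun n => (hAmeas _).nullMeasurableSet) hanti ⟨0, hAfin _⟩
      rw [hin, hBA] at h1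
      exact (ENNReal.tendsto_toReal (hAfin θ)).comp h1
    rw [Metric.continuousAt_iff]
    intro ε hε
    obtain ⟨N₁, hN₁⟩ := (Metric.tendsto_atTop.mp hu) ε hε
    obtain ⟨N₂, hN₂⟩ := (Metric.tendsto_atTop.mp hv) ε hε
    have hu1 := hN₁ N₁ le_rfl
    have hv1 := hN₂ N₂ le_rfl
    rw [Real.dist_eq, abs_lt] at hu1 hv1
    refine ⟨min (1/(N₁+1)) (1/(N₂+1)), lt_min (by positivity) (by positivity), ?_⟩
    intro t ht
    rw [Real.dist_eq, abs_lt] at ht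
    rw [Real.dist_eq, abs_lt]
    have hd1 : t ≤ θ + 1/(N₁+1) := by
      have := lt_min_iff.mp ht.2 |>.1
      linarith [min_le_left ((1:ℝ)/(N₁+1)) ((1:ℝ)/(N₂+1))]
    have hd2 : θ - 1/(N₂+1) ≤ t := by
      have := ht.1
      linarith [min_le_right ((1:ℝ)/(N₁+1)) ((1:ℝ)/(N₂+1))]
    have hmu : m (θ + 1/(N₁+1)) ≤ m t := hmanti hd1
    have hmv : m t ≤ m (θ - 1/(N₂+1)) := hmanti hd2
    constructor <;> push_cast at hu1 hv1 ⊢ <;> linarith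
  -- main part
  intro θ hθIoo
  obtain ⟨hθ0, hθm⟩ := hθIoo
  have hgeq : g = fun t => (1 / (2 * Real.pi)) * h t := funext hg
  have hder : HasDerivAt h (m θ) θ := by
    rw [hasDerivAt_iff_tendsto_slope]
    have hbound : ∀ t : ℝ, t ≠ θ → |slope h θ t - m θ| ≤ |m t - m θ| := by
      intro t ht
      rcases lt_or_gt_of_ne ht with hlt | hgt
      · obtain ⟨hlo, hhi⟩ := hkey (le_of_lt hlt)
        have hslope : slope h θ t = (h θ - h t)/(θ - t) := by
          rw [slope_def_field]
          rw [div_eq_div_iff (by linarith) (by linarith)]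
          ring
        have hd : (0:ℝ) < θ - t := by linarith
        have h1 : m θ ≤ slope h θ t := by
          rw [hslope, le_div_iff₀ hd]
          linarith
        have h2 : slope h θ t ≤ m t := by
          rw [hslope, div_le_iff₀ hd]
          linarith
        have hmm : m θ ≤ m t := hmanti (le_of_lt hlt)
        rw [abs_of_nonneg (by linarith), abs_of_nonneg (by linarith)]
        linarith
      · obtain ⟨hlo, hhi⟩ := hkey (le_of_lt hgt)
        have hslope : slope h θ t = (h t - h θ)/(t - θ) := slope_def_field h θ t
        have hd : (0:ℝ) < t - θ := by linarith
        have h1 : m t ≤ slope h θ t := by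
          rw [hslope, le_div_iff₀ hd]
          linarith
        have h2 : slope h θ t ≤ m θ := by
          rw [hslope, div_le_iff₀ hd]
          linarith
        have hmm : m t ≤ m θ := hmanti (le_of_lt hgt)
        rw [abs_of_nonpos (by linarith), abs_of_nonpos (by linarith)]
        linarith
    have hm0 : Filter.Tendsto (fun t => |m t - m θ|) (nhdsWithin θ {θ}ᶜ) (nhds 0) := by
      have h1 : Filter.Tendsto (fun t => m t - m θ) (nhds θ) (nhds 0) := by
        have h0 : Filter.Tendsto m (nhds θ) (nhds (m θ)) := hmcont θ hθ0
        simpa using h0.sub (tendsto_const_nhds (x := m θ))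
      have h2 := h1.abs
      simp only [abs_zero] at h2
      exact h2.mono_left nhdsWithin_le_nhds
    rw [tendsto_iff_dist_tendsto_zero]
    apply squeeze_zero' (Filter.Eventually.of_forall fun t => dist_nonneg) ?_ hm0
    filter_upwards [self_mem_nhdsWithin] with t ht
    rw [Real.dist_eq]
    exact hbound t ht
  constructor
  · rw [hgeq]
    exact hder.const_mul _
  · have hmpos : 0 < m θ := by
      have hS0 : S 0 = θmax := by
        rw [hS 0, Real.cos_zero, hθmax]
        congr 1
        ring
    -- continuity at 0 gives a neighborhood where S > θ
      have hc : ContinuousAt S 0 := hScont.continuousAt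
      rw [Metric.continuousAt_iff] at hc
      obtain ⟨δ, hδ, hball⟩ := hc (θmax - θ) (by linarith)
      set δ' := min δ Real.pi with hδ'
      have hδ'pos : 0 < δ' := lt_min hδ hpi
      have hsub : Set.Ioo (-δ') δ' ⊆ A θ := by
        intro ω hω
        have h1 : |ω| < δ' := abs_lt.mpr ⟨hω.1, hω.2⟩
        have h2 : dist ω 0 < δ := by
          rw [Real.dist_eq, sub_zero]
          exact lt_of_lt_of_le h1 (min_le_left _ _)
        have h3 := hball h2
        rw [Real.dist_eq, hS0] at h3
        have h4 : |ω| ≤ Real.pi := le_trans h1.le (min_le_right _ _)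
        rw [abs_le] at h4
        refine ⟨⟨h4.1, h4.2⟩, ?_⟩
        have := abs_lt.mp h3
        linarith
      have hge : volume (Set.Ioo (-δ') δ') ≤ volume (A θ) := measure_mono hsub
      rw [Real.volume_Ioo] at hge
      apply ENNReal.toReal_pos _ (hAfin θ)
      intro hzero
      rw [hzero] at hge
      simp only [nonpos_iff_eq_zero, ENNReal.ofReal_eq_zero] at hge
      linarith
    apply mul_pos _ hmpos
    positivity
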